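/- Strahov's partial-fraction/Schur identity: for 1 ≤ L ≤ N and pairwise distinct parameters x_1,...,x_N and y_1,...,y_L (with every y_l distinct from every x_n), ∏_{l=1}^L y_l^{N-L}/∏_{n=1}^N (y_l − x_n) = ∑_{σ ∈ S_N/(S_{N−L}×S_L)} [Δ_L(x_{σ(1)},...,x_{σ(L)}) · Δ_{N−L}(x_{σ(L+1)},...,x_{σ(N)}) · ∏_{n=1}^L x_{σ(n)}^{N−L}] / [Δ_N(x_{σ(1)},...,x_{σ(N)}) · ∏_{n,l=1}^L (y_l − x_{σ(n)})], where the sum runs over a complete set of coset representatives. -/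

import Mathlib

/-- The Vandermonde determinant in product form. -/
def Vand {K : ℕ} (v : Fin K → ℂ) : ℂ := ∏ i : Fin K, ∏ j ∈ Finset.Ioi i, (v i - v j)

/-- The coset representative `τ_s ∈ S_N` associated with an `L`-element subset
`s = {l_1 < ... < l_L}` of `{1,...,N}`: it sends `(1,...,L)` to `(l_1,...,l_L)` and
`(L+1,...,N)` to the complement of `s` in increasing order; these permutations form a
complete set of representatives of the cosets `S_N/(S_{N-L} × S_L)`. -/
def tau (N L : ℕ) (hL : L ≤ N) (s : Finset (Fin N)) (hs : s.card = L)
    (hs' : (sᶜ).card = N - L) : Equiv.Perm (Fin N) :=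
  (((finCongr (Nat.add_sub_cancel' hL)).symm.trans finSumFinEquiv.symm).trans
    ((Equiv.sumCongr (s.orderIsoOfFin hs).toEquiv ((sᶜ).orderIsoOfFin hs').toEquiv).trans
      ((Equiv.sumCongr (Equiv.refl _)
          (Equiv.subtypeEquivRight (fun _ => Finset.mem_compl))).trans
        (Equiv.sumCompl (· ∈ s)))))


lemma Vand_eq_ite {K : ℕ} (v : Fin K → ℂ) :
    Vand v = ∏ i : Fin K, ∏ j : Fin K, if i < j then v i - v j else 1 := by
  unfold Vand
  refine Finset.prod_congr rfl fun i _ => ?_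
  have : Finset.Ioi i = Finset.univ.filter (fun j => i < j) := by
    ext j; simp
  rw [this, Finset.prod_filter]

lemma Vand_ne_zero {K : ℕ} {v : Fin K → ℂ} (hv : Function.Injective v) : Vand v ≠ 0 := by
  unfold Vand
  rw [Finset.prod_ne_zero_iff]
  intro i _
  rw [Finset.prod_ne_zero_iff]
  intro j hj
  rw [Finset.mem_Ioi] at hj
  exact sub_ne_zero.mpr (fun h => absurd (hv h) hj.ne)

lemma Vand_split (a b : ℕ) (v : Fin (a + b) → ℂ) :
    Vand v = Vand (v ∘ Fin.castAdd b) * Vand (v ∘ Fin.natAdd a) *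
      ∏ i : Fin a, ∏ j : Fin b, (v (Fin.castAdd b i) - v (Fin.natAdd a j)) := by
  rw [Vand_eq_ite]
  rw [← Equiv.prod_comp finSumFinEquiv
    (fun i => ∏ j : Fin (a+b), if i < j then v i - v j else 1)]
  have : ∀ i : Fin a ⊕ Fin b,
      (∏ j : Fin (a+b), if finSumFinEquiv i < j then v (finSumFinEquiv i) - v j else 1)
      = ∏ j : Fin a ⊕ Fin b, if finSumFinEquiv i < finSumFinEquiv j then
          v (finSumFinEquiv i) - v (finSumFinEquiv j) else 1 := fun i =>
    (Equiv.prod_comp finSumFinEquiv _).symm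
  rw [Fintype.prod_congr _ _ this, Fintype.prod_sum_type]
  have hlt : ∀ (i : Fin a) (j : Fin b),
      finSumFinEquiv (Sum.inl i) < finSumFinEquiv (Sum.inr j) := by
    intro i j
    simp only [finSumFinEquiv_apply_left, finSumFinEquiv_apply_right, Fin.lt_def,
      Fin.coe_castAdd, Fin.coe_natAdd]
    omega
  have h1 : ∀ i : Fin a,
      (∏ j : Fin a ⊕ Fin b, if finSumFinEquiv (Sum.inl i) < finSumFinEquiv j then
          v (finSumFinEquiv (Sum.inl i)) - v (finSumFinEquiv j) else 1)
      = (∏ j : Fin a, if i < j then v (Fin.castAdd b i) - v (Fin.castAdd b j) else 1) *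
        ∏ j : Fin b, (v (Fin.castAdd b i) - v (Fin.natAdd a j)) := by
    intro i
    rw [Fintype.prod_sum_type]
    congr 1
    refine Fintype.prod_congr _ _ fun j => ?_
    rw [if_pos (hlt i j), finSumFinEquiv_apply_left, finSumFinEquiv_apply_right]
  have h2 : ∀ i : Fin b,
      (∏ j : Fin a ⊕ Fin b, if finSumFinEquiv (Sum.inr i) < finSumFinEquiv j then
          v (finSumFinEquiv (Sum.inr i)) - v (finSumFinEquiv j) else 1)
      = ∏ j : Fin b, if i < j then v (Fin.natAdd a i) - v (Fin.natAdd a j) else 1 := by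
    intro i
    rw [Fintype.prod_sum_type]
    have hz : (∏ j : Fin a, if finSumFinEquiv (Sum.inr i) < finSumFinEquiv (Sum.inl j) then
        v (finSumFinEquiv (Sum.inr i)) - v (finSumFinEquiv (Sum.inl j)) else 1) = 1 := by
      refine Finset.prod_eq_one fun j _ => ?_
      rw [if_neg]
      exact fun h => absurd (h.trans (hlt j i)) (lt_irrefl _)
    rw [hz, one_mul]
    refine Fintype.prod_congr _ _ fun j => ?_
    simp only [finSumFinEquiv_apply_right]
    exact if_congr (by simp only [Fin.lt_def, Fin.coe_natAdd]; omega) rfl rfl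
  rw [Fintype.prod_congr _ _ h1, Fintype.prod_congr _ _ h2]
  rw [Finset.prod_mul_distrib]
  rw [Vand_eq_ite, Vand_eq_ite]
  simp only [Function.comp_apply]
  ring

lemma Vand_cast {K K' : ℕ} (h : K' = K) (v : Fin K → ℂ) :
    Vand (v ∘ Fin.cast h) = Vand v := by
  subst h
  rfl

open Polynomial in
lemma strahov_key (N L : ℕ) (hL : L ≤ N) (x : Fin N → ℂ) (hx : Function.Injective x)
    (y : Fin L → ℂ) :
    ∏ l : Fin L, y l ^ (N - L)
      = ∑ s : {s : Finset (Fin N) // s.card = L},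
          ((∏ m ∈ s.1, x m ^ (N - L)) / ∏ m ∈ s.1, ∏ n ∈ s.1ᶜ, (x m - x n)) *
            ∏ l : Fin L, ∏ n ∈ s.1ᶜ, (y l - x n) := by
  suffices H : ∀ k : ℕ, ∀ (y : Fin L → ℂ) (g : Fin L → Fin N),
      Set.InjOn g {i : Fin L | k ≤ (i : ℕ)} → (∀ i : Fin L, k ≤ (i : ℕ) → y i = x (g i)) →
      ∏ l : Fin L, y l ^ (N - L)
        = ∑ s : {s : Finset (Fin N) // s.card = L},
            ((∏ m ∈ s.1, x m ^ (N - L)) / ∏ m ∈ s.1, ∏ n ∈ s.1ᶜ, (x m - x n)) *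
              ∏ l : Fin L, ∏ n ∈ s.1ᶜ, (y l - x n) by
    refine H L y (Fin.castLE hL) ?_ ?_
    · intro i hi
      exact absurd i.isLt (by simp only [Set.mem_setOf_eq] at hi; omega)
    · intro i hi
      exact absurd i.isLt (by omega)
  intro k
  induction k with
  | zero =>
    intro y g hinj hag
    have hg : Function.Injective g := fun i j h =>
      hinj (by simp) (by simp) h
    have hyg : ∀ i, y i = x (g i) := fun i => hag i (Nat.zero_le _)
    set s0 : Finset (Fin N) := Finset.univ.image g with hs0def
    have hs0 : s0.card = L := by
      rw [hs0def, Finset.card_image_of_injective _ hg, Finset.card_univ, Fintype.card_fin]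
    rw [Fintype.sum_eq_single (⟨s0, hs0⟩ : {s : Finset (Fin N) // s.card = L})]
    · have hD : (∏ m ∈ s0, ∏ n ∈ s0ᶜ, (x m - x n)) ≠ 0 := by
        rw [Finset.prod_ne_zero_iff]
        intro m hm
        rw [Finset.prod_ne_zero_iff]
        intro n hn
        refine sub_ne_zero.mpr fun h => ?_
        exact Finset.mem_compl.mp hn (hx h ▸ hm)
      have h1 : (∏ l : Fin L, ∏ n ∈ s0ᶜ, (y l - x n))
          = ∏ m ∈ s0, ∏ n ∈ s0ᶜ, (x m - x n) := by
        rw [hs0def, Finset.prod_image (fun i _ j _ h => hg h)]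
        refine Finset.prod_congr rfl fun l _ => ?_
        refine Finset.prod_congr rfl fun n _ => ?_
        rw [hyg l]
      have h2 : (∏ m ∈ s0, x m ^ (N - L)) = ∏ l : Fin L, y l ^ (N - L) := by
        rw [hs0def, Finset.prod_image (fun i _ j _ h => hg h)]
        exact Finset.prod_congr rfl fun l _ => by rw [hyg l]
      rw [h1, div_mul_cancel₀ _ hD, h2]
    · rintro ⟨s, hs⟩ hne
      have : ∃ l, g l ∉ s := by
        by_contra hc
        push_neg at hc
        have hsub : s0 ⊆ s := by
          rw [hs0def]
          intro m hm
          obtain ⟨l, _, rfl⟩ := Finset.mem_image.mp hm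
          exact hc l
        have : s0 = s := Finset.eq_of_subset_of_card_le hsub (by rw [hs, hs0])
        exact hne (Subtype.ext this.symm)
      obtain ⟨l, hl⟩ := this
      have : (∏ l : Fin L, ∏ n ∈ sᶜ, (y l - x n)) = 0 := by
        refine Finset.prod_eq_zero (Finset.mem_univ l) ?_
        refine Finset.prod_eq_zero (Finset.mem_compl.mpr hl) ?_
        rw [hyg l, sub_self]
      rw [this, mul_zero]
  | succ k ih =>
    intro y g hinj hag
    by_cases hkL : L ≤ k
    · refine ih y g ?_ ?_
      · intro i hi
        exact absurd i.isLt (by simp only [Set.mem_setOf_eq] at hi; omega)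
      · intro i hi
        exact absurd i.isLt (by omega)
    push_neg at hkL
    set i0 : Fin L := ⟨k, hkL⟩ with hi0def
    have hi0val : (i0 : ℕ) = k := rfl
    set T : Finset (Fin N) := (Finset.Ioi i0).image g with hTdef
    have hTcard : T.card ≤ L - 1 - k := by
      refine le_trans Finset.card_image_le ?_
      rw [Fin.card_Ioi]
    have hmemT : ∀ i : Fin L, i ≠ i0 → k ≤ (i : ℕ) → g i ∈ T := by
      intro i hi hk'
      refine Finset.mem_image_of_mem g ?_
      rw [Finset.mem_Ioi]
      have h2 : (i0 : ℕ) ≠ (i : ℕ) := fun h => hi (Fin.ext h.symm)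
      simp only [Fin.lt_def]
      omega
    have hstep : ∀ i : Fin L, i ≠ i0 → k ≤ (i : ℕ) → k + 1 ≤ (i : ℕ) := by
      intro i hi hk'
      have h2 : (i0 : ℕ) ≠ (i : ℕ) := fun h => hi (Fin.ext h.symm)
      omega
    -- the polynomial
    set c : {s : Finset (Fin N) // s.card = L} → ℂ := fun s =>
      (∏ m ∈ s.1, x m ^ (N - L)) / ∏ m ∈ s.1, ∏ n ∈ s.1ᶜ, (x m - x n) with hcdef
    set p : ℂ[X] :=
      C (∏ l ∈ Finset.univ.erase i0, y l ^ (N - L)) * X ^ (N - L)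
      - ∑ s : {s : Finset (Fin N) // s.card = L},
          C (c s * ∏ l ∈ Finset.univ.erase i0, ∏ n ∈ s.1ᶜ, (y l - x n)) *
            ∏ n ∈ s.1ᶜ, (X - C (x n)) with hpdef
    have heval : ∀ t : ℂ, p.eval t
        = (∏ l : Fin L, (Function.update y i0 t) l ^ (N - L))
          - ∑ s : {s : Finset (Fin N) // s.card = L},
              c s * ∏ l : Fin L, ∏ n ∈ s.1ᶜ, ((Function.update y i0 t) l - x n) := by
      intro t
      have hprod : ∀ f : Fin L → ℂ, ∏ l : Fin L, f l = f i0 * ∏ l ∈ Finset.univ.erase i0, f l :=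
        fun f => (Finset.mul_prod_erase Finset.univ f (Finset.mem_univ i0)).symm
      rw [hpdef]
      simp only [eval_sub, eval_mul, eval_C, eval_pow, eval_X, eval_finset_sum, eval_prod,
        eval_sub, eval_mul, eval_C, eval_X]
      congr 1
      · have hupd : ∏ l ∈ Finset.univ.erase i0, (Function.update y i0 t) l ^ (N - L)
            = ∏ l ∈ Finset.univ.erase i0, y l ^ (N - L) :=
          Finset.prod_congr rfl fun l hl => by
            rw [Function.update_of_ne (Finset.ne_of_mem_erase hl)]
        rw [hprod (fun l => (Function.update y i0 t) l ^ (N - L)), Function.update_self, hupd]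
        ring
      · refine Finset.sum_congr rfl fun s _ => ?_
        have hupd : ∏ l ∈ Finset.univ.erase i0, ∏ n ∈ s.1ᶜ, ((Function.update y i0 t) l - x n)
            = ∏ l ∈ Finset.univ.erase i0, ∏ n ∈ s.1ᶜ, (y l - x n) :=
          Finset.prod_congr rfl fun l hl => Finset.prod_congr rfl fun n _ => by
            rw [Function.update_of_ne (Finset.ne_of_mem_erase hl)]
        rw [hprod (fun l => ∏ n ∈ s.1ᶜ, ((Function.update y i0 t) l - x n)),
          Function.update_self, hupd]
        ring
    have hcompl : ∀ s : {s : Finset (Fin N) // s.card = L}, (s.1ᶜ).card = N - L := by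
      intro s
      rw [Finset.card_compl, s.2, Fintype.card_fin]
    have hdeg : p.natDegree ≤ N - L := by
      rw [hpdef]
      refine le_trans (natDegree_sub_le _ _) (max_le ?_ ?_)
      · exact le_trans (natDegree_C_mul_le _ _) (le_of_eq (natDegree_X_pow _))
      · refine natDegree_sum_le_of_forall_le _ _ fun s _ => ?_
        refine le_trans (natDegree_C_mul_le _ _) ?_
        refine le_trans (natDegree_prod_le _ _) ?_
        refine le_trans (Finset.sum_le_card_nsmul _ _ 1 fun n _ => le_of_eq (natDegree_X_sub_C _)) ?_
        rw [smul_eq_mul, mul_one, hcompl s]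
    have hroots : ∀ m ∈ Tᶜ, p.eval (x m) = 0 := by
      intro m hm
      rw [heval (x m), sub_eq_zero]
      refine ih (Function.update y i0 (x m)) (Function.update g i0 m) ?_ ?_
      · intro i hi j hj hgij
        simp only [Set.mem_setOf_eq] at hi hj
        by_cases hii : i = i0 <;> by_cases hjj : j = i0
        · rw [hii, hjj]
        · exfalso
          rw [hii, Function.update_self, Function.update_of_ne hjj] at hgij
          exact (Finset.mem_compl.mp hm) (hgij ▸ hmemT j hjj hj)
        · exfalso
          rw [hjj, Function.update_self, Function.update_of_ne hii] at hgij
          exact (Finset.mem_compl.mp hm) (hgij ▸ hmemT i hii hi)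
        · rw [Function.update_of_ne hii, Function.update_of_ne hjj] at hgij
          exact hinj (hstep i hii hi) (hstep j hjj hj) hgij
      · intro i hi
        by_cases hii : i = i0
        · rw [hii, Function.update_self, Function.update_self]
        · rw [Function.update_of_ne hii, Function.update_of_ne hii]
          exact hag i (hstep i hii hi)
    have hp0 : p = 0 := by
      refine eq_zero_of_natDegree_lt_card_of_eval_eq_zero' p ((Tᶜ).image x) ?_ ?_
      · intro z hz
        obtain ⟨m, hm, rfl⟩ := Finset.mem_image.mp hz
        exact hroots m hm
      · rw [Finset.card_image_of_injective _ hx]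
        have h1 : (Tᶜ).card = N - T.card := by
          rw [Finset.card_compl, Fintype.card_fin]
        omega
    have := heval (y i0)
    rw [hp0, eval_zero, Function.update_eq_self, eq_comm, sub_eq_zero] at this
    exact this

lemma tau_apply_left (N L : ℕ) (hL : L ≤ N) (s : Finset (Fin N)) (hs : s.card = L)
    (hs' : (sᶜ).card = N - L) (i : Fin L) :
    tau N L hL s hs hs' (Fin.castLE hL i) = ↑(s.orderIsoOfFin hs i) := by
  unfold tau
  simp only [Equiv.trans_apply]
  have h1 : (finCongr (Nat.add_sub_cancel' hL)).symm (Fin.castLE hL i)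
      = Fin.castAdd (N - L) i := by ext; simp
  rw [h1, finSumFinEquiv_symm_apply_castAdd]
  simp

lemma tau_apply_right (N L : ℕ) (hL : L ≤ N) (s : Finset (Fin N)) (hs : s.card = L)
    (hs' : (sᶜ).card = N - L) (j : Fin (N - L)) :
    tau N L hL s hs hs' (Fin.cast (Nat.add_sub_cancel' hL) (Fin.natAdd L j))
      = ↑((sᶜ).orderIsoOfFin hs' j) := by
  unfold tau
  simp only [Equiv.trans_apply]
  have h1 : (finCongr (Nat.add_sub_cancel' hL)).symm
        (Fin.cast (Nat.add_sub_cancel' hL) (Fin.natAdd L j))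
      = Fin.natAdd L j := by ext; simp
  rw [h1, finSumFinEquiv_symm_apply_natAdd]
  simp

lemma prod_orderIso {N L : ℕ} (s : Finset (Fin N)) (hs : s.card = L) (f : Fin N → ℂ) :
    ∏ i : Fin L, f ((s.orderIsoOfFin hs i : Fin N)) = ∏ m ∈ s, f m :=
  (Equiv.prod_comp (s.orderIsoOfFin hs).toEquiv (fun a : {m // m ∈ s} => f ↑a)).trans
    (Finset.prod_coe_sort s f)

/-- Strahov's partial-fraction/Schur identity. For `1 ≤ L ≤ N` and pairwise
distinct parameters `x 1, ..., x N` and `y 1, ..., y L` with every `y l` distinct from every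
`x n`:
`∏_l y_l^{N-L}/∏_n (y_l - x_n)
  = ∑_{σ ∈ S_N/(S_{N-L}×S_L)} Δ_L(x_{σ(1)},...,x_{σ(L)}) Δ_{N-L}(x_{σ(L+1)},...,x_{σ(N)})
      ∏_{n=1}^L x_{σ(n)}^{N-L} / (Δ_N(x_{σ(1)},...,x_{σ(N)}) ∏_{n,l=1}^L (y_l - x_{σ(n)}))`,
the sum running over the coset representatives `τ_s` indexed by `L`-element subsets `s`. -/
theorem strahov_identity (N L : ℕ) (hL1 : 1 ≤ L) (hL : L ≤ N)
    (x : Fin N → ℂ) (y : Fin L → ℂ)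
    (hx : Function.Injective x) (hy : Function.Injective y)
    (hxy : ∀ l n, y l ≠ x n) :
    (∏ l : Fin L, y l ^ (N - L) / ∏ n : Fin N, (y l - x n))
      = ∑ s : {s : Finset (Fin N) // s.card = L},
          (Vand (fun i : Fin L =>
              x (tau N L hL s.1 s.2 (by simp [Finset.card_compl, s.2]) (Fin.castLE hL i))) *
            Vand (fun i : Fin (N - L) =>
              x (tau N L hL s.1 s.2 (by simp [Finset.card_compl, s.2])
                (Fin.cast (Nat.add_sub_cancel' hL) (Fin.natAdd L i)))) *
            ∏ n : Fin L,
              x (tau N L hL s.1 s.2 (by simp [Finset.card_compl, s.2])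
                (Fin.castLE hL n)) ^ (N - L)) /
          (Vand (x ∘ tau N L hL s.1 s.2 (by simp [Finset.card_compl, s.2])) *
            ∏ n : Fin L, ∏ l : Fin L,
              (y l - x (tau N L hL s.1 s.2 (by simp [Finset.card_compl, s.2])
                (Fin.castLE hL n)))) := by
  have h : L + (N - L) = N := Nat.add_sub_cancel' hL
  rw [Finset.prod_div_distrib, strahov_key N L hL x hx y, Finset.sum_div]
  refine Finset.sum_congr rfl fun s _ => ?_
  have hs' : (s.1ᶜ).card = N - L := by simp [Finset.card_compl, s.2]
  set τ := tau N L hL s.1 s.2 hs' with hτ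
  have hA1 : ∀ i : Fin L, τ (Fin.castLE hL i) = ↑(s.1.orderIsoOfFin s.2 i) :=
    tau_apply_left N L hL s.1 s.2 hs'
  have hA2 : ∀ j : Fin (N - L),
      τ (Fin.cast (Nat.add_sub_cancel' hL) (Fin.natAdd L j)) = ↑((s.1ᶜ).orderIsoOfFin hs' j) :=
    tau_apply_right N L hL s.1 s.2 hs'
  -- notation
  set ι : Fin L → Fin N := fun i => ↑(s.1.orderIsoOfFin s.2 i) with hι
  set κ : Fin (N - L) → Fin N := fun j => ↑((s.1ᶜ).orderIsoOfFin hs' j) with hκ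
  have hf1 : (fun i : Fin L => x (τ (Fin.castLE hL i))) = fun i => x (ι i) :=
    funext fun i => by rw [hA1 i]
  have hf2 : (fun j : Fin (N - L) =>
      x (τ (Fin.cast (Nat.add_sub_cancel' hL) (Fin.natAdd L j)))) = fun j => x (κ j) :=
    funext fun j => by rw [hA2 j]
  -- split of the big Vandermonde
  have hsplit : Vand (x ∘ τ)
      = Vand (fun i => x (ι i)) * Vand (fun j => x (κ j)) *
        ∏ i : Fin L, ∏ j : Fin (N - L), (x (ι i) - x (κ j)) := by
    rw [← Vand_cast h (x ∘ τ), Vand_split L (N - L)]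
    have e1 : ((x ∘ τ) ∘ Fin.cast h) ∘ Fin.castAdd (N - L) = fun i => x (ι i) := by
      funext i
      have : Fin.cast h (Fin.castAdd (N - L) i) = Fin.castLE hL i := by ext; simp
      simp only [Function.comp_apply, this, hA1 i, hι]
    have e2 : ((x ∘ τ) ∘ Fin.cast h) ∘ Fin.natAdd L = fun j => x (κ j) := by
      funext j
      simp only [Function.comp_apply, hA2 j, hκ]
    rw [e1, e2]
    congr 1
    refine Finset.prod_congr rfl fun i _ => Finset.prod_congr rfl fun j _ => ?_
    have : Fin.cast h (Fin.castAdd (N - L) i) = Fin.castLE hL i := by ext; simp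
    simp only [Function.comp_apply, this, hA1 i, hA2 j, hι, hκ]
  -- reindexing products over s
  have hP : (∏ n : Fin L, x (τ (Fin.castLE hL n)) ^ (N - L)) = ∏ m ∈ s.1, x m ^ (N - L) := by
    rw [show (fun n : Fin L => x (τ (Fin.castLE hL n)) ^ (N - L))
        = fun n => x (ι n) ^ (N - L) from funext fun n => by rw [hA1 n]]
    exact prod_orderIso s.1 s.2 (fun m => x m ^ (N - L))
  have hQ : (∏ n : Fin L, ∏ l : Fin L, (y l - x (τ (Fin.castLE hL n))))
      = ∏ m ∈ s.1, ∏ l : Fin L, (y l - x m) := by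
    rw [show (fun n : Fin L => ∏ l : Fin L, (y l - x (τ (Fin.castLE hL n))))
        = fun n => ∏ l : Fin L, (y l - x (ι n)) from funext fun n => by rw [hA1 n]]
    exact prod_orderIso s.1 s.2 (fun m => ∏ l : Fin L, (y l - x m))
  have hM : (∏ i : Fin L, ∏ j : Fin (N - L), (x (ι i) - x (κ j)))
      = ∏ m ∈ s.1, ∏ n ∈ s.1ᶜ, (x m - x n) := by
    have inner : ∀ m : Fin N, (∏ j : Fin (N - L), (x m - x (κ j)))
        = ∏ n ∈ s.1ᶜ, (x m - x n) := fun m =>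
      prod_orderIso (s.1ᶜ) hs' (fun n => x m - x n)
    rw [show (fun i : Fin L => ∏ j : Fin (N - L), (x (ι i) - x (κ j)))
        = fun i => ∏ n ∈ s.1ᶜ, (x (ι i) - x n) from funext fun i => inner (ι i)]
    exact prod_orderIso s.1 s.2 (fun m => ∏ n ∈ s.1ᶜ, (x m - x n))
  -- nonvanishing facts
  have hι_inj : Function.Injective fun i => x (ι i) := by
    intro i j hij
    have := hx hij
    have := (s.1.orderIsoOfFin s.2).injective (Subtype.ext this)
    exact this
  have hκ_inj : Function.Injective fun j => x (κ j) := by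
    intro i j hij
    exact ((s.1ᶜ).orderIsoOfFin hs').injective (Subtype.ext (hx hij))
  have hV1 : Vand (fun i => x (ι i)) ≠ 0 := Vand_ne_zero hι_inj
  have hV2 : Vand (fun j => x (κ j)) ≠ 0 := Vand_ne_zero hκ_inj
  have hMne : (∏ m ∈ s.1, ∏ n ∈ s.1ᶜ, (x m - x n)) ≠ 0 := by
    rw [Finset.prod_ne_zero_iff]
    intro m hm
    rw [Finset.prod_ne_zero_iff]
    intro n hn
    exact sub_ne_zero.mpr fun hc => (Finset.mem_compl.mp hn) (hx hc ▸ hm)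
  have hBne : (∏ l : Fin L, ∏ n ∈ s.1ᶜ, (y l - x n)) ≠ 0 := by
    rw [Finset.prod_ne_zero_iff]
    intro l _
    rw [Finset.prod_ne_zero_iff]
    intro n _
    exact sub_ne_zero.mpr (hxy l n)
  -- now rewrite the RHS summand
  rw [hf1, hf2, hsplit, hP, hQ, hM]
  set P := ∏ m ∈ s.1, x m ^ (N - L)
  set M := ∏ m ∈ s.1, ∏ n ∈ s.1ᶜ, (x m - x n)
  set A := ∏ l : Fin L, ∏ m ∈ s.1, (y l - x m) with hA
  set B := ∏ l : Fin L, ∏ n ∈ s.1ᶜ, (y l - x n)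
  have hD : (∏ l : Fin L, ∏ n : Fin N, (y l - x n)) = A * B := by
    rw [← Finset.prod_mul_distrib]
    refine Finset.prod_congr rfl fun l _ => ?_
    exact (Finset.prod_mul_prod_compl s.1 fun n => y l - x n).symm
  have hQA : (∏ m ∈ s.1, ∏ l : Fin L, (y l - x m)) = A := Finset.prod_comm
  rw [hD, hQA]
  set V1 := Vand (fun i => x (ι i))
  set V2 := Vand (fun j => x (κ j))
  -- LHS : (P / M * B) / (A * B), RHS : (V1 * V2 * P) / (V1 * V2 * M * A)
  rw [div_mul_eq_mul_div, div_div]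
  have lhs_eq : P * B / (M * (A * B)) = P / (M * A) := by
    rw [show M * (A * B) = M * A * B by ring]
    exact mul_div_mul_right _ _ hBne
  rw [lhs_eq]
  have rhs_eq : V1 * V2 * P / (V1 * V2 * M * A) = P / (M * A) := by
    rw [show V1 * V2 * M * A = V1 * V2 * (M * A) by ring]
    exact mul_div_mul_left _ _ (mul_ne_zero hV1 hV2)
  rw [rhs_eq]
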